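/- Let {E_{x,y}} be a quantum homomorphism X →_q Y. Suppose x has two adjacent neighbors x₁, x₂ in X (so xx₁, xx₂, x₁x₂ are all edges), and suppose S ⊆ V(Y) is a set such that E_{x₁,z} = 0 and E_{x₂,z} = 0 for all z ∉ S, and such that S ∩ N_Y(y) contains no edge of Y. Then E_{x,y} = 0. -/

import Mathlib

/-- If `A` and `B` are symmetric endomorphisms with `A * B = 0`, then `B * A = 0`. -/
lemma mul_zero_symm_rev {V : Type*} [NormedAddCommGroup V] [InnerProductSpace ℂ V]
    (A B : Module.End ℂ V) (hA : LinearMap.IsSymmetric A) (hB : LinearMap.IsSymmetric B)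
    (h : A * B = 0) : B * A = 0 := by
  apply LinearMap.ext
  intro u
  have h0 : ∀ v : V, inner ℂ ((B * A) u) v = (0 : ℂ) := by
    intro v
    have e1 : inner ℂ (B (A u)) v = inner ℂ (A u) (B v) := hB (A u) v
    have e2 : inner ℂ (A u) (B v) = inner ℂ u (A (B v)) := hA u (B v)
    have e3 : A (B v) = 0 := by
      have : (A * B) v = 0 := by rw [h]; rfl
      simpa [Module.End.mul_apply] using this
    simp only [Module.End.mul_apply, e1, e2, e3, inner_zero_right]
  have := h0 ((B * A) u)
  simpa [inner_self_eq_zero] using this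

/-- Let `{E x y}` be a quantum homomorphism `X →_q Y`.  Suppose `x` has two
adjacent neighbors `x₁, x₂` in `X` (so `x x₁`, `x x₂`, `x₁ x₂` are all edges),
and `S ⊆ V(Y)` is a set such that `E x₁ z = 0` and `E x₂ z = 0` for all
`z ∉ S`, and such that `S ∩ N_Y(y)` contains no edge of `Y`.
Then `E x y = 0`. -/
theorem gadget_localization
    {α β : Type*} [Fintype α] [Fintype β]
    {V : Type*} [NormedAddCommGroup V] [InnerProductSpace ℂ V]
    [FiniteDimensional ℂ V] [Nontrivial V]
    (X : SimpleGraph α) (Y : SimpleGraph β)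
    (E : α → β → Module.End ℂ V)
    (hsa : ∀ x y, LinearMap.IsSymmetric (E x y))
    (hidem : ∀ x y, E x y * E x y = E x y)
    (hsum : ∀ x, ∑ y, E x y = 1)
    (horth : ∀ x y y', y ≠ y' → E x y * E x y' = 0)
    (hedge : ∀ x x' y y', X.Adj x x' → ¬ Y.Adj y y' → E x y * E x' y' = 0)
    (x x₁ x₂ : α) (y : β)
    (h₁ : X.Adj x x₁) (h₂ : X.Adj x x₂) (h₁₂ : X.Adj x₁ x₂)
    (S : Set β)
    (hS₁ : ∀ z ∉ S, E x₁ z = 0)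
    (hS₂ : ∀ z ∉ S, E x₂ z = 0)
    (hSedge : ∀ z ∈ S, ∀ z' ∈ S, Y.Adj y z → Y.Adj y z' → ¬ Y.Adj z z') :
    E x y = 0 := by
  have key : E x y = ∑ z, ∑ z', E x y * E x₁ z * E x₂ z' * E x y := by
    have h0 : E x y * (∑ z, E x₁ z) * (∑ z', E x₂ z') * E x y = E x y := by
      rw [hsum, hsum, mul_one, mul_one, hidem]
    calc E x y = E x y * (∑ z, E x₁ z) * (∑ z', E x₂ z') * E x y := h0.symm
      _ = ∑ z, ∑ z', E x y * E x₁ z * E x₂ z' * E x y := by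
          simp only [Finset.mul_sum, Finset.sum_mul]
          exact Finset.sum_comm
  rw [key]
  apply Finset.sum_eq_zero
  intro z _
  apply Finset.sum_eq_zero
  intro z' _
  by_cases hz : z ∈ S
  · by_cases hz' : z' ∈ S
    · by_cases hyz : Y.Adj y z
      · by_cases hyz' : Y.Adj y z'
        · have hzz' : E x₁ z * E x₂ z' = 0 :=
            hedge x₁ x₂ z z' h₁₂ (hSedge z hz z' hz' hyz hyz')
          rw [mul_assoc (E x y), hzz', mul_zero, zero_mul]
        · have hrev : E x₂ z' * E x y = 0 :=
            mul_zero_symm_rev _ _ (hsa x y) (hsa x₂ z') (hedge x x₂ y z' h₂ hyz')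
          rw [mul_assoc, hrev, mul_zero]
      · have hxz : E x y * E x₁ z = 0 := hedge x x₁ y z h₁ hyz
        rw [hxz, zero_mul, zero_mul]
    · rw [hS₂ z' hz', mul_zero, zero_mul]
  · rw [hS₁ z hz, mul_zero, zero_mul, zero_mul]
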